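/- arXiv:1401.3681 — 2 statements merged into one kernel-verified Lean document; each statement's English description precedes it below -/
import Mathlib

section
/- Let A be a maximal monotone operator on ℝ^d, Π a generalized projection for A, y càdlàg with y_0 ∈ closure(D(A)), and (x,k) a solution of SP(A,Π;y). Then Δk_t = x_{t−} + Δy_t − Π(x_{t−} + Δy_t) for every t > 0, and consequently |Δk_t| ≤ 2|Δy_t| for every t ≥ 0. -/
open scoped RealInnerProductSpace
open Filter Set Function MeasureTheory Topology

noncomputable section

/-- Euclidean space `ℝ^d`. -/
abbrev Euc (d : ℕ) : Type := EuclideanSpace ℝ (Fin d)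

/-- The domain `D(A)` of a set-valued operator identified with its graph. -/
def opDomain {d : ℕ} (A : Set (Euc d × Euc d)) : Set (Euc d) := {z | ∃ y, (z, y) ∈ A}

/-- Monotonicity of the graph `A`. -/
def MonotoneGraph {d : ℕ} (A : Set (Euc d × Euc d)) : Prop :=
  ∀ p ∈ A, ∀ q ∈ A, 0 ≤ ⟪p.2 - q.2, p.1 - q.1⟫

/-- Maximal monotonicity of the graph `A`. -/
def MaximalMonotoneGraph {d : ℕ} (A : Set (Euc d × Euc d)) : Prop :=
  MonotoneGraph A ∧
    ∀ z y : Euc d, (∀ p ∈ A, 0 ≤ ⟪y - p.2, z - p.1⟫) → (z, y) ∈ A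

/-- A generalized (non-expansive) projection onto `closure (D(A))`. -/
def IsGenProj {d : ℕ} (A : Set (Euc d × Euc d)) (proj : Euc d → Euc d) : Prop :=
  (∀ z, proj z ∈ closure (opDomain A)) ∧
  (∀ z ∈ closure (opDomain A), proj z = z) ∧
  (∀ z z', ‖proj z - proj z'‖ ≤ ‖z - z'‖)

/-- `y` is càdlàg on `[0,∞)`: right-continuous and with left limits. -/
def Cadlag {d : ℕ} (y : ℝ → Euc d) : Prop :=
  (∀ t : ℝ, 0 ≤ t → ContinuousWithinAt y (Ici t) t) ∧
  (∀ t : ℝ, 0 < t → ∃ l, Tendsto y (𝓝[<] t) (𝓝 l))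

/-- The jump `Δy_t = y_t - y_{t-}` (with `Δy_0 := 0`). -/
def jump {d : ℕ} (y : ℝ → Euc d) (t : ℝ) : Euc d :=
  if 0 < t then y t - leftLim y t else 0

/-- The left limit `y_{t-}` (with `y_{0-} := y_0`). -/
def lleft {d : ℕ} (y : ℝ → Euc d) (t : ℝ) : Euc d :=
  if 0 < t then leftLim y t else y 0

/-- Continuous part `k^c_t = k_t - ∑_{s ≤ t} Δk_s` of a function of locally bounded
variation. -/
def contPart {d : ℕ} (k : ℝ → Euc d) : ℝ → Euc d :=
  fun t => k t - ∑' s : Icc (0 : ℝ) t, jump k ↑s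

/-- `lsInt g k s t I` : the Lebesgue–Stieltjes integral `∫_(s,t] ⟪g_u, dk_u⟫` equals `I`,
expressed via convergence of right-endpoint Riemann–Stieltjes sums (which converge to the
Lebesgue–Stieltjes integral for càdlàg `g` and càdlàg `k` of bounded variation). -/
def lsInt {d : ℕ} (g k : ℝ → Euc d) (s t I : ℝ) : Prop :=
  ∀ ε > 0, ∃ δ > 0, ∀ (n : ℕ) (τ : ℕ → ℝ), τ 0 = s → τ n = t →
    (∀ i < n, τ i < τ (i + 1) ∧ τ (i + 1) - τ i ≤ δ) →
    |(∑ i ∈ Finset.range n, ⟪g (τ (i + 1)), k (τ (i + 1)) - k (τ i)⟫) - I| ≤ ε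

/-- `lsIntLeft g k s t I` : the Lebesgue–Stieltjes integral `∫_(s,t] ⟪g_{u-}, dk_u⟫` equals
`I`, expressed via convergence of left-endpoint Riemann–Stieltjes sums. -/
def lsIntLeft {d : ℕ} (g k : ℝ → Euc d) (s t I : ℝ) : Prop :=
  ∀ ε > 0, ∃ δ > 0, ∀ (n : ℕ) (τ : ℕ → ℝ), τ 0 = s → τ n = t →
    (∀ i < n, τ i < τ (i + 1) ∧ τ (i + 1) - τ i ≤ δ) →
    |(∑ i ∈ Finset.range n, ⟪g (τ i), k (τ (i + 1)) - k (τ i)⟫) - I| ≤ ε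

/-- `(x, k)` solves the Skorokhod problem `SP(A, Π; y)`. -/
def SkorokhodSolution {d : ℕ} (A : Set (Euc d × Euc d)) (proj : Euc d → Euc d)
    (y x k : ℝ → Euc d) : Prop :=
  Cadlag x ∧ Cadlag k ∧
  (∀ t : ℝ, 0 ≤ t → x t = y t - k t ∧ x t ∈ closure (opDomain A)) ∧
  LocallyBoundedVariationOn k (Ici 0) ∧ k 0 = 0 ∧
  (∀ α β : Euc d, (α, β) ∈ A → ∀ s t : ℝ, 0 ≤ s → s < t →
    ∃ I : ℝ, lsInt (fun u => x u - α) (contPart k) s t I ∧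
      0 ≤ I - ∫ u in Ioc s t, ⟪x u - α, β⟫) ∧
  (∀ t : ℝ, 0 ≤ t → jump k t ≠ 0 → x t = proj (lleft x t + jump y t))


/-- For a solution `(x, k)` of `SP(A, Π; y)`:
`Δk_t = x_{t−} + Δy_t − Π(x_{t−} + Δy_t)` for every `t > 0`, and consequently
`|Δk_t| ≤ 2 |Δy_t|` for every `t ≥ 0`. -/
theorem skorokhod_problem_jump_formula {d : ℕ} (A : Set (Euc d × Euc d))
    (proj : Euc d → Euc d) (hA : MaximalMonotoneGraph A) (hproj : IsGenProj A proj)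
    (y x k : ℝ → Euc d) (hy : Cadlag y) (hy0 : y 0 ∈ closure (opDomain A))
    (hsol : SkorokhodSolution A proj y x k) :
    (∀ t : ℝ, 0 < t →
      jump k t = lleft x t + jump y t - proj (lleft x t + jump y t)) ∧
    (∀ t : ℝ, 0 ≤ t → ‖jump k t‖ ≤ 2 * ‖jump y t‖) := by
  obtain ⟨hx, hk, hxy, _, _, _, hjc⟩ := hsol
  -- basic facts for each t > 0
  have key : ∀ t : ℝ, 0 < t →
      Tendsto x (𝓝[<] t) (𝓝 (leftLim x t)) ∧
      leftLim x t = leftLim y t - leftLim k t ∧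
      leftLim x t ∈ closure (opDomain A) := by
    intro t ht
    obtain ⟨lx, hlx⟩ := hx.2 t ht
    obtain ⟨ly, hly⟩ := hy.2 t ht
    obtain ⟨lk, hlk⟩ := hk.2 t ht
    have hne : (𝓝[<] t : Filter ℝ) ≠ ⊥ := (nhdsLT_neBot t).ne'
    have hmem : Ioo (0:ℝ) t ∈ 𝓝[<] t := Ioo_mem_nhdsLT_of_mem ⟨ht, le_refl t⟩
    have hex : leftLim x t = lx := leftLim_eq_of_tendsto (h := ⟨hne⟩) hlx
    have hey : leftLim y t = ly := leftLim_eq_of_tendsto (h := ⟨hne⟩) hly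
    have hek : leftLim k t = lk := leftLim_eq_of_tendsto (h := ⟨hne⟩) hlk
    refine ⟨hex ▸ hlx, ?_, ?_⟩
    · rw [hex, hey, hek]
      have h2 : Tendsto x (𝓝[<] t) (𝓝 (ly - lk)) := by
        have := hly.sub hlk
        refine Tendsto.congr' ?_ this
        filter_upwards [hmem] with u hu
        exact ((hxy u hu.1.le).1).symm
      exact tendsto_nhds_unique hlx h2
    · rw [hex]
      refine isClosed_closure.mem_of_tendsto hlx ?_
      filter_upwards [hmem] with u hu
      exact (hxy u hu.1.le).2
  have main : ∀ t : ℝ, 0 < t →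
      jump k t = lleft x t + jump y t - proj (lleft x t + jump y t) := by
    intro t ht
    obtain ⟨_, hsplit, hmemcl⟩ := key t ht
    have hll : lleft x t = leftLim x t := if_pos ht
    have hjk : jump k t = k t - leftLim k t := if_pos ht
    have hjy : jump y t = y t - leftLim y t := if_pos ht
    have hxt : x t = y t - k t := (hxy t ht.le).1
    -- z = leftLim x t + jump y t;  x t - z = -(jump k t)
    have hz : lleft x t + jump y t - x t = jump k t := by
      rw [hll, hjk, hjy, hsplit, hxt]
      abel
    by_cases hk0 : jump k t = 0
    · -- then x t = z ∈ closure, proj z = z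
      have hzx : lleft x t + jump y t = x t := by
        have h := hz; rw [hk0] at h
        exact sub_eq_zero.mp h
      rw [hzx, hproj.2.1 (x t) (hxy t ht.le).2, hk0]
      simp
    · rw [← hz, hjc t ht.le hk0]
  refine ⟨main, ?_⟩
  intro t ht
  rcases eq_or_lt_of_le ht with h0 | h0
  · have : jump k t = 0 := by rw [jump, if_neg (by rw [← h0]; exact lt_irrefl 0)]
    rw [this]
    simp only [norm_zero]
    positivity
  · rw [main t h0]
    have hll : lleft x t = leftLim x t := if_pos h0
    have hmemcl := (key t h0).2.2
    have hfix : proj (lleft x t) = lleft x t := by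
      rw [hll]; exact hproj.2.1 _ hmemcl
    set z := lleft x t + jump y t
    have h1 : ‖z - proj z‖ ≤ ‖z - lleft x t‖ + ‖proj (lleft x t) - proj z‖ := by
      rw [hfix]
      calc ‖z - proj z‖ = ‖(z - lleft x t) + (lleft x t - proj z)‖ := by abel_nf
        _ ≤ ‖z - lleft x t‖ + ‖lleft x t - proj z‖ := norm_add_le _ _
      
    have h2 : ‖proj (lleft x t) - proj z‖ ≤ ‖lleft x t - z‖ := hproj.2.2 _ _
    have h3 : z - lleft x t = jump y t := by simp [z]
    have h4 : ‖lleft x t - z‖ = ‖jump y t‖ := by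
      rw [← h3, norm_sub_rev]
    have h5 : ‖z - lleft x t‖ = ‖jump y t‖ := by rw [h3]
    linarith [h1, h2, h4, h5]

end
end

section
/- Let A be a maximal monotone operator on ℝ^d and let y : [0,∞) → ℝ^d be continuous with y_0 ∈ closure(D(A)). If Π and Π' are generalized projections for A, (x,k) is a solution of SP(A,Π;y) and (x',k') is a solution of SP(A,Π';y), then x and k are continuous functions and (x,k) = (x',k'); i.e., for continuous input the solution of the Skorokhod problem is continuous and does not depend on the choice of generalized projection. -/
open scoped RealInnerProductSpace
open Filter Set Function MeasureTheory Topology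

noncomputable section

namespace SkoAux
variable {d : ℕ}

lemma tau_le {n : ℕ} {τ : ℕ → ℝ} (h : ∀ i < n, τ i < τ (i+1)) :
    ∀ j ≤ n, ∀ i ≤ j, τ i ≤ τ j := by
  intro j hj
  induction j with
  | zero => intro i hi; rw [Nat.le_zero.mp hi]
  | succ m ih =>
    intro i hi
    rcases Nat.le_succ_iff.mp hi with hi' | hi'
    · exact le_trans (ih (le_trans (Nat.le_succ m) hj) i hi')
        (le_of_lt (h m (Nat.lt_of_succ_le hj)))
    · rw [hi']

/-- real variation of `k` on `[a,b]`. -/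
def Vr (k : ℝ → Euc d) (a b : ℝ) : ℝ := (eVariationOn k (Icc a b)).toReal

lemma Vr_nonneg (k : ℝ → Euc d) (a b : ℝ) : 0 ≤ Vr k a b := ENNReal.toReal_nonneg

lemma bvOn {k : ℝ → Euc d} (hk : LocallyBoundedVariationOn k (Ici 0)) {a b : ℝ}
    (ha : 0 ≤ a) (hb : 0 ≤ b) : BoundedVariationOn k (Icc a b) := by
  have h := hk a b ha hb
  have e : Ici (0:ℝ) ∩ Icc a b = Icc a b :=
    inter_eq_self_of_subset_right (fun u hu => le_trans ha hu.1)
  rwa [e] at h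

lemma sum_norm_sub_le {k : ℝ → Euc d} {a b : ℝ} (hk : BoundedVariationOn k (Icc a b))
    {n : ℕ} {τ : ℕ → ℝ} (hmono : ∀ j ≤ n, ∀ i ≤ j, τ i ≤ τ j)
    (hmem : ∀ i ≤ n, τ i ∈ Icc a b) :
    ∑ i ∈ Finset.range n, ‖k (τ (i+1)) - k (τ i)‖ ≤ Vr k a b := by
  set u : ℕ → ℝ := fun i => τ (min i n) with hu
  have humono : Monotone u := by
    intro i j hij
    exact hmono (min j n) (min_le_right _ _) (min i n) (by omega)
  have humem : ∀ i, u i ∈ Icc a b := fun i => hmem _ (min_le_right _ _)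
  have h1 : (ENNReal.ofReal (∑ i ∈ Finset.range n, ‖k (τ (i+1)) - k (τ i)‖))
      ≤ eVariationOn k (Icc a b) := by
    rw [ENNReal.ofReal_sum_of_nonneg (fun i _ => norm_nonneg _)]
    have h2 := eVariationOn.sum_le (f := k) (n := n) humono humem
    refine le_trans (le_of_eq ?_) h2
    apply Finset.sum_congr rfl
    intro i hi
    rw [Finset.mem_range] at hi
    have e1 : u (i+1) = τ (i+1) := by simp [hu, min_eq_left (by omega : i+1 ≤ n)]
    have e2 : u i = τ i := by simp [hu, min_eq_left (by omega : i ≤ n)]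
    rw [e1, e2, edist_dist, dist_eq_norm]
  calc ∑ i ∈ Finset.range n, ‖k (τ (i+1)) - k (τ i)‖
      = (ENNReal.ofReal (∑ i ∈ Finset.range n, ‖k (τ (i+1)) - k (τ i)‖)).toReal := by
        rw [ENNReal.toReal_ofReal (Finset.sum_nonneg (fun i _ => norm_nonneg _))]
    _ ≤ Vr k a b := ENNReal.toReal_mono hk h1

lemma norm_sub_le_Vr {k : ℝ → Euc d} {a b : ℝ} (hk : BoundedVariationOn k (Icc a b))
    (hab : a ≤ b) : ‖k b - k a‖ ≤ Vr k a b := by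
  have h := sum_norm_sub_le hk (n := 1) (τ := fun i => if i = 0 then a else b)
    (by intro j hj i hi
        interval_cases j <;> interval_cases i <;> simp [hab])
    (by intro i hi
        interval_cases i <;> simp [hab, left_mem_Icc, right_mem_Icc])
  simpa using h

lemma Vr_add {k : ℝ → Euc d} (hk : LocallyBoundedVariationOn k (Ici 0)) {a b c : ℝ}
    (ha : 0 ≤ a) (hab : a ≤ b) (hbc : b ≤ c) :
    Vr k a b + Vr k b c = Vr k a c := by
  have h := eVariationOn.Icc_add_Icc k (s := Icc a c) hab hbc ⟨hab, hbc⟩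
  rw [inter_eq_self_of_subset_right (Icc_subset_Icc le_rfl hbc),
      inter_eq_self_of_subset_right (Icc_subset_Icc hab le_rfl),
      inter_self] at h
  have hfin : BoundedVariationOn k (Icc a c) := bvOn hk ha (le_trans ha (le_trans hab hbc))
  have h1 : BoundedVariationOn k (Icc a b) := hfin.mono (Icc_subset_Icc le_rfl hbc)
  have h2 : BoundedVariationOn k (Icc b c) := hfin.mono (Icc_subset_Icc hab le_rfl)
  rw [Vr, Vr, Vr, ← h, ENNReal.toReal_add h1 h2]

end SkoAux

namespace SkoAux
variable {d : ℕ}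

/-- uniform partition point -/
def pt (a b : ℝ) (m i : ℕ) : ℝ := a + i * (b - a) / m

lemma pt_zero (a b : ℝ) (m : ℕ) : pt a b m 0 = a := by simp [pt]

lemma pt_last (a b : ℝ) {m : ℕ} (hm : m ≠ 0) : pt a b m m = b := by
  have : (m:ℝ) ≠ 0 := Nat.cast_ne_zero.mpr hm
  rw [pt, mul_div_cancel_left₀ _ this]
  ring

lemma pt_succ_sub (a b : ℝ) (m i : ℕ) : pt a b m (i+1) - pt a b m i = (b - a) / m := by
  simp only [pt]
  push_cast
  ring

lemma pt_mono {a b : ℝ} (hab : a ≤ b) (m : ℕ) {i j : ℕ} (hij : i ≤ j) :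
    pt a b m i ≤ pt a b m j := by
  have h1 : (i:ℝ) ≤ (j:ℝ) := Nat.cast_le.mpr hij
  have h2 : (0:ℝ) ≤ (b - a)/m := div_nonneg (sub_nonneg.mpr hab) (Nat.cast_nonneg m)
  have h3 := mul_le_mul_of_nonneg_right h1 h2
  simp only [pt, mul_div_assoc]
  linarith

lemma pt_mem {a b : ℝ} (hab : a ≤ b) {m : ℕ} (hm : m ≠ 0) {i : ℕ} (hi : i ≤ m) :
    pt a b m i ∈ Icc a b := by
  constructor
  · have := pt_mono hab m (Nat.zero_le i); rwa [pt_zero] at this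
  · have := pt_mono hab m hi; rwa [pt_last a b hm] at this

lemma pt_strict {a b : ℝ} (hab : a < b) {m : ℕ} (hm : m ≠ 0) (i : ℕ) :
    pt a b m i < pt a b m (i+1) := by
  have h := pt_succ_sub a b m i
  have hm' : (0:ℝ) < m := by exact_mod_cast Nat.pos_of_ne_zero hm
  have : (0:ℝ) < (b - a) / m := div_pos (by linarith) hm'
  linarith

/-- left-half reindex -/
lemma pt_left (a b : ℝ) {m : ℕ} (hm : m ≠ 0) (i : ℕ) :
    pt a b (2*m) i = pt a ((a+b)/2) m i := by
  have hm' : (m:ℝ) ≠ 0 := Nat.cast_ne_zero.mpr hm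
  simp only [pt]
  push_cast
  field_simp
  ring_nf

lemma pt_right (a b : ℝ) {m : ℕ} (hm : m ≠ 0) (i : ℕ) :
    pt a b (2*m) (m + i) = pt ((a+b)/2) b m i := by
  have hm' : (m:ℝ) ≠ 0 := Nat.cast_ne_zero.mpr hm
  simp only [pt]
  push_cast
  field_simp
  ring_nf

/-- Riemann-Stieltjes sum over the uniform partition of `[a,b]` with `m` pieces,
integrand `z` at right endpoints against increments of `w`. -/
def S2 (z w : ℝ → Euc d) (a b : ℝ) (m : ℕ) : ℝ :=
  ∑ i ∈ Finset.range m, ⟪z (pt a b m (i+1)), w (pt a b m (i+1)) - w (pt a b m i)⟫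

lemma S2_split (z w : ℝ → Euc d) (a b : ℝ) {m : ℕ} (hm : m ≠ 0) :
    S2 z w a b (2*m) = S2 z w a ((a+b)/2) m + S2 z w ((a+b)/2) b m := by
  unfold S2
  have h2m : 2*m = m + m := by ring
  rw [h2m, Finset.sum_range_add]
  congr 1
  · apply Finset.sum_congr rfl
    intro i _
    rw [← h2m, pt_left a b hm, pt_left a b hm]
  · apply Finset.sum_congr rfl
    intro i _
    have e1 : m + i + 1 = m + (i + 1) := by ring
    rw [← h2m, e1, pt_right a b hm, pt_right a b hm]

/-- quadratic estimate -/
lemma norm_sq_le_two_sum (z : ℝ → Euc d) {n : ℕ} (τ : ℕ → ℝ) (hz0 : z (τ 0) = 0) :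
    ‖z (τ n)‖^2 ≤ 2 * ∑ i ∈ Finset.range n, ⟪z (τ (i+1)), z (τ (i+1)) - z (τ i)⟫ := by
  have key : ∀ i, ‖z (τ (i+1))‖^2 - ‖z (τ i)‖^2
      ≤ 2 * ⟪z (τ (i+1)), z (τ (i+1)) - z (τ i)⟫ := by
    intro i
    set A := z (τ (i+1)); set B := z (τ i)
    have h1 : ‖A - B‖^2 = ‖A‖^2 - 2 * ⟪A, B⟫ + ‖B‖^2 := norm_sub_sq_real A B
    have h2 : ⟪A, A - B⟫ = ‖A‖^2 - ⟪A, B⟫ := by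
      rw [inner_sub_right, real_inner_self_eq_norm_sq]
    nlinarith [sq_nonneg ‖A - B‖]
  calc ‖z (τ n)‖^2 = ∑ i ∈ Finset.range n, (‖z (τ (i+1))‖^2 - ‖z (τ i)‖^2) := by
        rw [Finset.sum_range_sub (fun i => ‖z (τ i)‖^2), hz0]; simp
    _ ≤ ∑ i ∈ Finset.range n, 2 * ⟪z (τ (i+1)), z (τ (i+1)) - z (τ i)⟫ :=
        Finset.sum_le_sum (fun i _ => key i)
    _ = 2 * ∑ i ∈ Finset.range n, ⟪z (τ (i+1)), z (τ (i+1)) - z (τ i)⟫ := by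
        rw [Finset.mul_sum]

/-- telescoping inner product sum -/
lemma sum_inner_tel (v : Euc d) (k : ℝ → Euc d) (n : ℕ) (τ : ℕ → ℝ) :
    ∑ i ∈ Finset.range n, ⟪v, k (τ (i+1)) - k (τ i)⟫ = ⟪v, k (τ n) - k (τ 0)⟫ := by
  have h := Finset.sum_range_sub (fun j => (⟪v, k (τ j)⟫ : ℝ)) n
  simp only [inner_sub_right]
  exact h

/-- perturbation bound -/
lemma sum_inner_pert {g : ℕ → Euc d} {k : ℝ → Euc d} {n : ℕ} {τ : ℕ → ℝ} {η B : ℝ}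
    (hg : ∀ i < n, ‖g i‖ ≤ η) (hB : ∑ i ∈ Finset.range n, ‖k (τ (i+1)) - k (τ i)‖ ≤ B)
    (hη : 0 ≤ η) :
    |∑ i ∈ Finset.range n, ⟪g i, k (τ (i+1)) - k (τ i)⟫| ≤ η * B := by
  calc |∑ i ∈ Finset.range n, ⟪g i, k (τ (i+1)) - k (τ i)⟫|
      ≤ ∑ i ∈ Finset.range n, |⟪g i, k (τ (i+1)) - k (τ i)⟫| := Finset.abs_sum_le_sum_abs _ _
    _ ≤ ∑ i ∈ Finset.range n, η * ‖k (τ (i+1)) - k (τ i)‖ := by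
        apply Finset.sum_le_sum
        intro i hi
        rw [Finset.mem_range] at hi
        calc |⟪g i, k (τ (i+1)) - k (τ i)⟫| ≤ ‖g i‖ * ‖k (τ (i+1)) - k (τ i)‖ :=
              abs_real_inner_le_norm _ _
          _ ≤ η * ‖k (τ (i+1)) - k (τ i)‖ :=
              mul_le_mul_of_nonneg_right (hg i hi) (norm_nonneg _)
    _ = η * ∑ i ∈ Finset.range n, ‖k (τ (i+1)) - k (τ i)‖ := by rw [Finset.mul_sum]
    _ ≤ η * B := mul_le_mul_of_nonneg_left hB hη

end SkoAux

-- continuity chunk (appended to base defs)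
namespace SkoAux
variable {d : ℕ}

lemma y_left {y : ℝ → Euc d} (hy : ContinuousOn y (Ici 0)) {t : ℝ} (ht : 0 < t) :
    Tendsto y (𝓝[<] t) (𝓝 (y t)) :=
  (((hy t ht.le).continuousAt (Ici_mem_nhds ht)).tendsto).mono_left nhdsWithin_le_nhds

lemma jump_y_zero {y : ℝ → Euc d} (hy : ContinuousOn y (Ici 0)) (t : ℝ) :
    jump y t = 0 := by
  rcases le_or_gt t 0 with h | h
  · simp [jump, not_lt.mpr h]
  · have hL : leftLim y t = y t :=
      leftLim_eq_of_tendsto (y_left hy h)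
    simp [jump, h, hL]

lemma sol_no_jump {A : Set (Euc d × Euc d)} {proj : Euc d → Euc d}
    (hproj : IsGenProj A proj) {y x k : ℝ → Euc d} (hy : ContinuousOn y (Ici 0))
    (hx_cad : Cadlag x)
    (hxk : ∀ t : ℝ, 0 ≤ t → x t = y t - k t ∧ x t ∈ closure (opDomain A))
    (hjmp : ∀ t : ℝ, 0 ≤ t → jump k t ≠ 0 → x t = proj (lleft x t + jump y t)) :
    ∀ t : ℝ, jump k t = 0 := by
  intro t
  rcases le_or_gt t 0 with h | ht
  · simp [jump, not_lt.mpr h]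
  by_contra hne
  have hx_eq := hjmp t ht.le hne
  obtain ⟨l, hl⟩ := hx_cad.2 t ht
  have hL : leftLim x t = l := leftLim_eq_of_tendsto hl
  have hIoo : Ioo (0:ℝ) t ∈ 𝓝[<] t := Ioo_mem_nhdsLT_of_mem ⟨ht, le_rfl⟩
  have hlc : l ∈ closure (opDomain A) := by
    apply isClosed_closure.mem_of_tendsto hl
    filter_upwards [hIoo] with u hu
    exact (hxk u hu.1.le).2
  have hxt : x t = l := by
    rw [hx_eq, jump_y_zero hy, add_zero, lleft, if_pos ht, hL]
    exact hproj.2.1 l hlc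
  -- left limit of k
  have hk_ev : k =ᶠ[𝓝[<] t] fun u => y u - x u := by
    filter_upwards [hIoo] with u hu
    have := (hxk u hu.1.le).1
    rw [this]; abel
  have hk_tend : Tendsto k (𝓝[<] t) (𝓝 (y t - l)) := by
    apply Tendsto.congr' hk_ev.symm
    exact (y_left hy ht).sub hl
  have hkL : leftLim k t = y t - l := leftLim_eq_of_tendsto hk_tend
  apply hne
  have hxt' : x t = y t - k t := (hxk t ht.le).1
  rw [jump, if_pos ht, hkL]
  rw [show k t = y t - x t by rw [hxt']; abel, hxt]
  abel

lemma contPart_eq_self {k : ℝ → Euc d} (h : ∀ t, jump k t = 0) : contPart k = k := by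
  funext u
  rw [contPart]
  have hz : (fun s : Icc (0:ℝ) u => jump k ↑s) = fun _ => 0 := funext fun s => h s.val
  rw [show (∑' s : Icc (0:ℝ) u, jump k ↑s) = 0 by rw [hz]; exact tsum_zero, sub_zero]

lemma cadlag_continuous {k : ℝ → Euc d} (hk : Cadlag k) (h : ∀ t, jump k t = 0) :
    ContinuousOn k (Ici 0) := by
  intro t ht
  rcases eq_or_lt_of_le (show (0:ℝ) ≤ t from ht) with h0 | ht'
  · rw [← h0]; exact hk.1 0 le_rfl
  · apply ContinuousAt.continuousWithinAt
    obtain ⟨l, hl⟩ := hk.2 t ht'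
    have hL : leftLim k t = l := leftLim_eq_of_tendsto hl
    have hlk : l = k t := by
      have h1 := h t
      rw [jump, if_pos ht', hL] at h1
      exact (sub_eq_zero.mp h1).symm
    rw [continuousAt_iff_continuous_left_right]
    constructor
    · -- left continuity
      rw [ContinuousWithinAt, ← Iio_union_right, nhdsWithin_union, tendsto_sup]
      refine ⟨by rw [← hlk]; exact hl, ?_⟩
      rw [nhdsWithin_singleton]
      exact tendsto_pure_nhds k t
    · exact hk.1 t ht

end SkoAux

namespace SkoAux
variable {d : ℕ}

lemma integral_lower {x : ℝ → Euc d} (hxc : ContinuousOn x (Ici 0)) {a b : ℝ}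
    (ha : 0 ≤ a) (hab : a < b) (α β p : Euc d) {η : ℝ}
    (hosc : ∀ u ∈ Icc a b, ‖x u - p‖ ≤ η) :
    (⟪p - α, β⟫ - η * ‖β‖) * (b - a) ≤ ∫ u in Ioc a b, ⟪x u - α, β⟫ := by
  have hxcc : ContinuousOn (fun u => (⟪x u - α, β⟫ : ℝ)) (Icc a b) := by
    apply ContinuousOn.inner
    · exact (hxc.mono (fun u hu => le_trans ha hu.1)).sub continuousOn_const
    · exact continuousOn_const
  have hint : IntegrableOn (fun u => (⟪x u - α, β⟫ : ℝ)) (Ioc a b) volume :=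
    (hxcc.integrableOn_Icc).mono_set Ioc_subset_Icc_self
  have hconst : IntegrableOn (fun _ : ℝ => (⟪p - α, β⟫ - η * ‖β‖ : ℝ)) (Ioc a b) volume :=
    integrableOn_const (by rw [Real.volume_Ioc]; exact ENNReal.ofReal_ne_top)
  have hpt : ∀ u ∈ Ioc a b, (⟪p - α, β⟫ - η * ‖β‖ : ℝ) ≤ ⟪x u - α, β⟫ := by
    intro u hu
    have hdiff : (⟪x u - α, β⟫ : ℝ) - ⟪p - α, β⟫ = ⟪x u - p, β⟫ := by
      rw [← inner_sub_left]; congr 1; abel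
    have h1 : |(⟪x u - p, β⟫ : ℝ)| ≤ η * ‖β‖ := by
      calc |(⟪x u - p, β⟫ : ℝ)| ≤ ‖x u - p‖ * ‖β‖ := abs_real_inner_le_norm _ _
        _ ≤ η * ‖β‖ := mul_le_mul_of_nonneg_right
            (hosc u (Ioc_subset_Icc_self hu)) (norm_nonneg _)
    have := neg_abs_le (⟪x u - p, β⟫ : ℝ)
    linarith
  have hmono := MeasureTheory.setIntegral_mono_on hconst hint measurableSet_Ioc hpt
  rw [MeasureTheory.setIntegral_const, Real.volume_real_Ioc_of_le hab.le,
    smul_eq_mul, mul_comm] at hmono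
  exact hmono

lemma increment_lower {A : Set (Euc d × Euc d)} {x k : ℝ → Euc d}
    (hC : ∀ α β : Euc d, (α, β) ∈ A → ∀ s t : ℝ, 0 ≤ s → s < t →
      ∃ I : ℝ, lsInt (fun u => x u - α) k s t I ∧
        0 ≤ I - ∫ u in Ioc s t, ⟪x u - α, β⟫)
    (hkv : LocallyBoundedVariationOn k (Ici 0)) (hxc : ContinuousOn x (Ici 0))
    {a b : ℝ} (ha : 0 ≤ a) (hab : a < b) {α β : Euc d} (hαβ : (α, β) ∈ A)
    {p : Euc d} {η : ℝ} (hη : 0 ≤ η) (hosc : ∀ u ∈ Icc a b, ‖x u - p‖ ≤ η)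
    {ε : ℝ} (hε : 0 < ε) :
    ⟪p - α, β⟫ * (b - a) - η * ‖β‖ * (b - a) - η * Vr k a b - ε
      ≤ ⟪p - α, k b - k a⟫ := by
  obtain ⟨I, hls, hI⟩ := hC α β hαβ a b ha hab
  obtain ⟨δ, hδ, hδ2⟩ := hls ε hε
  obtain ⟨n, hn⟩ := exists_nat_ge ((b - a) / δ)
  set m : ℕ := n + 1 with hmdef
  have hm0 : m ≠ 0 := Nat.succ_ne_zero n
  have hmpos : (0:ℝ) < m := by exact_mod_cast Nat.pos_of_ne_zero hm0
  have hmesh : (b - a) / m ≤ δ := by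
    rw [div_le_iff₀ hmpos]
    have h2 : (b - a) / δ ≤ (m:ℝ) := le_trans hn (by exact_mod_cast Nat.le_succ n)
    rw [div_le_iff₀ hδ] at h2
    linarith
  have hb0 : 0 ≤ b := le_trans ha hab.le
  have hsum := hδ2 m (pt a b m) (pt_zero a b m) (pt_last a b hm0)
    (fun i _ => ⟨pt_strict hab hm0 i, by rw [pt_succ_sub]; exact hmesh⟩)
  -- split the Riemann sum
  have hsplit : (∑ i ∈ Finset.range m, ⟪x (pt a b m (i+1)) - α,
        k (pt a b m (i+1)) - k (pt a b m i)⟫)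
      = ⟪p - α, k b - k a⟫
        + ∑ i ∈ Finset.range m, ⟪x (pt a b m (i+1)) - p,
            k (pt a b m (i+1)) - k (pt a b m i)⟫ := by
    have e1 : ∀ i ∈ Finset.range m, (⟪x (pt a b m (i+1)) - α,
        k (pt a b m (i+1)) - k (pt a b m i)⟫ : ℝ)
        = ⟪p - α, k (pt a b m (i+1)) - k (pt a b m i)⟫
          + ⟪x (pt a b m (i+1)) - p, k (pt a b m (i+1)) - k (pt a b m i)⟫ := by
      intro i _
      rw [← inner_add_left]
      congr 1
      abel
    rw [Finset.sum_congr rfl e1, Finset.sum_add_distrib]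
    congr 1
    have := sum_inner_tel (p - α) k m (pt a b m)
    rw [this, pt_last a b hm0, pt_zero]
  have hE : |∑ i ∈ Finset.range m, ⟪x (pt a b m (i+1)) - p,
      k (pt a b m (i+1)) - k (pt a b m i)⟫| ≤ η * Vr k a b := by
    apply sum_inner_pert (τ := pt a b m)
    · intro i hi
      exact hosc _ (pt_mem hab.le hm0 (by omega))
    · apply sum_norm_sub_le (bvOn hkv ha hb0)
      · intro j hj i hi
        exact pt_mono hab.le m hi
      · intro i hi
        exact pt_mem hab.le hm0 hi
    · exact hη
  have hIlow := integral_lower hxc ha hab α β p hosc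
  rw [hsplit] at hsum
  have h1 := abs_le.mp hsum
  have h2 := abs_le.mp hE
  linarith
end SkoAux

namespace SkoAux
variable {d : ℕ}

/-- abstract bisection with infinite pigeonhole -/
lemma bisect (S : ℝ → ℝ → ℕ → ℝ) (ρ : ℝ → ℝ → ℝ) (t₀ θ : ℝ) (ht₀ : 0 < t₀)
    (hsplit : ∀ a b N, 0 ≤ a → a < b →
      S a b (N+1) = S a ((a+b)/2) N + S ((a+b)/2) b N)
    (hρadd : ∀ a r b : ℝ, 0 ≤ a → a ≤ r → r ≤ b → ρ a r + ρ r b = ρ a b)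
    (hbase : ∀ N, S 0 t₀ N ≤ -θ * ρ 0 t₀) :
    ∃ (a b : ℕ → ℝ) (N : ℕ → ℕ), (∀ g, 0 ≤ a g) ∧ (∀ g, a g < b g) ∧ (∀ g, b g ≤ t₀) ∧
      Monotone a ∧ Antitone b ∧ (∀ g, b g - a g = t₀ / 2^g) ∧
      (∀ g, S (a g) (b g) (N g) ≤ -θ * ρ (a g) (b g)) := by
  classical
  set Good : ℝ × ℝ → Prop := fun q =>
    0 ≤ q.1 ∧ q.1 < q.2 ∧ q.2 ≤ t₀ ∧ {N : ℕ | S q.1 q.2 N ≤ -θ * ρ q.1 q.2}.Infinite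
    with hGood
  have hbase' : Good (0, t₀) := by
    refine ⟨le_rfl, ht₀, le_rfl, ?_⟩
    have : {N : ℕ | S 0 t₀ N ≤ -θ * ρ 0 t₀} = univ :=
      eq_univ_of_forall (fun N => hbase N)
    rw [this]; exact infinite_univ
  have hstep : ∀ q, Good q → Good (q.1, (q.1+q.2)/2) ∨ Good ((q.1+q.2)/2, q.2) := by
    rintro ⟨a, b⟩ ⟨h0, hab, hbt, hinf⟩
    simp only at h0 hab hbt hinf
    set r := (a+b)/2 with hr
    have har : a < r := by rw [hr]; linarith
    have hrb : r < b := by rw [hr]; linarith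
    have hSinf : {N : ℕ | N+1 ∈ {N : ℕ | S a b N ≤ -θ * ρ a b}}.Infinite := by
      by_contra hfin
      rw [not_infinite] at hfin
      apply hinf
      have hsub : {N : ℕ | S a b N ≤ -θ * ρ a b} ⊆
          (fun N => N+1) '' {N : ℕ | N+1 ∈ {N : ℕ | S a b N ≤ -θ * ρ a b}} ∪ {0} := by
        intro M hM
        rcases Nat.eq_zero_or_pos M with h | h
        · exact Or.inr (by simp [h])
        · exact Or.inl ⟨M - 1, by simpa [Nat.sub_add_cancel h] using hM,
            Nat.sub_add_cancel h⟩
      exact Set.Finite.subset ((hfin.image _).union (finite_singleton 0)) hsub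
    have hsub2 : {N : ℕ | N+1 ∈ {N : ℕ | S a b N ≤ -θ * ρ a b}} ⊆
        {N : ℕ | S a r N ≤ -θ * ρ a r} ∪ {N : ℕ | S r b N ≤ -θ * ρ r b} := by
      intro N hN
      simp only [mem_setOf_eq] at hN
      rw [hsplit a b N h0 hab, ← hρadd a r b h0 har.le hrb.le] at hN
      by_contra hcon
      simp only [mem_union, mem_setOf_eq] at hcon
      push_neg at hcon
      linarith [hcon.1, hcon.2]
    have : ({N : ℕ | S a r N ≤ -θ * ρ a r} ∪ {N : ℕ | S r b N ≤ -θ * ρ r b}).Infinite :=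
      hSinf.mono hsub2
    rcases Set.infinite_union.mp this with h | h
    · exact Or.inl ⟨h0, har, le_trans hrb.le hbt, h⟩
    · exact Or.inr ⟨le_trans h0 har.le, hrb, hbt, h⟩
  -- construct the sequence
  have hstep' : ∀ q : {q : ℝ × ℝ // Good q},
      {q' : {q : ℝ × ℝ // Good q} // q.1.1 ≤ q'.1.1 ∧ q'.1.2 ≤ q.1.2 ∧
        q'.1.2 - q'.1.1 = (q.1.2 - q.1.1)/2} := by
    rintro ⟨⟨a, b⟩, hq⟩
    by_cases h : Good (a, (a+b)/2)
    · exact ⟨⟨(a, (a+b)/2), h⟩, le_rfl, by simp only; linarith [hq.2.1], by simp only; ring⟩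
    · refine ⟨⟨((a+b)/2, b), (hstep (a,b) hq).resolve_left h⟩,
        by simp only; linarith [hq.2.1], le_rfl, by simp only; ring⟩
  set F : ℕ → {q : ℝ × ℝ // Good q} :=
    fun g => Nat.rec ⟨(0, t₀), hbase'⟩ (fun _ p => (hstep' p).1) g with hF
  have hFsucc : ∀ g, F (g+1) = (hstep' (F g)).1 := fun g => rfl
  set a : ℕ → ℝ := fun g => (F g).1.1
  set b : ℕ → ℝ := fun g => (F g).1.2
  have hstep2 : ∀ g, a g ≤ a (g+1) ∧ b (g+1) ≤ b g ∧ b (g+1) - a (g+1) = (b g - a g)/2 :=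
    fun g => by rw [show a (g+1) = (hstep' (F g)).1.1.1 from rfl,
      show b (g+1) = (hstep' (F g)).1.1.2 from rfl]; exact (hstep' (F g)).2
  have hgood : ∀ g, Good (a g, b g) := fun g => (F g).2
  have hlen : ∀ g, b g - a g = t₀ / 2^g := by
    intro g
    induction g with
    | zero => simp [a, b, hF]
    | succ n ih => rw [(hstep2 n).2.2, ih, pow_succ]; ring
  have hNex : ∀ g, ∃ N, S (a g) (b g) N ≤ -θ * ρ (a g) (b g) := by
    intro g
    obtain ⟨N, hN⟩ := (hgood g).2.2.2.nonempty
    exact ⟨N, hN⟩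
  choose N hN using hNex
  exact ⟨a, b, N, fun g => (hgood g).1, fun g => (hgood g).2.1,
    fun g => (hgood g).2.2.1, monotone_nat_of_le_succ (fun g => (hstep2 g).1),
    antitone_nat_of_succ_le (fun g => (hstep2 g).2.1), hlen, hN⟩

lemma limit_point {a b : ℕ → ℝ} (ha : Monotone a) (hb : Antitone b)
    (hab : ∀ g, a g < b g) : ∃ u, ∀ g, a g ≤ u ∧ u ≤ b g := by
  have hcross : ∀ g h, a g ≤ b h := by
    intro g h
    calc a g ≤ a (max g h) := ha (le_max_left _ _)
      _ ≤ b (max g h) := (hab _).le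
      _ ≤ b h := hb (le_max_right _ _)
  have hbdd : BddAbove (Set.range a) := ⟨b 0, by rintro _ ⟨g, rfl⟩; exact hcross g 0⟩
  refine ⟨sSup (Set.range a), fun g => ⟨le_csSup hbdd ⟨g, rfl⟩, ?_⟩⟩
  exact csSup_le (Set.range_nonempty a) (by rintro _ ⟨g', rfl⟩; exact hcross g' g)

/-- approximation of the Riemann–Stieltjes sum for `w = k - k'` by a single inner product -/
lemma S2_close {z k k' : ℝ → Euc d} {a b : ℝ}
    (hkB : BoundedVariationOn k (Icc a b)) (hkB' : BoundedVariationOn k' (Icc a b))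
    {m : ℕ} (hm : m ≠ 0) (hab : a ≤ b) (p : Euc d) {η : ℝ} (hη : 0 ≤ η)
    (hosc : ∀ u ∈ Icc a b, ‖z u - p‖ ≤ η) :
    |S2 z (fun u => k u - k' u) a b m
        - ⟪p, (k b - k' b) - (k a - k' a)⟫| ≤ η * (Vr k a b + Vr k' a b) := by
  set w : ℝ → Euc d := fun u => k u - k' u with hw
  have hsplit : S2 z w a b m = ⟪p, w b - w a⟫
      + ∑ i ∈ Finset.range m, ⟪z (pt a b m (i+1)) - p,
          w (pt a b m (i+1)) - w (pt a b m i)⟫ := by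
    unfold S2
    have e1 : ∀ i ∈ Finset.range m, (⟪z (pt a b m (i+1)),
        w (pt a b m (i+1)) - w (pt a b m i)⟫ : ℝ)
        = ⟪p, w (pt a b m (i+1)) - w (pt a b m i)⟫
          + ⟪z (pt a b m (i+1)) - p, w (pt a b m (i+1)) - w (pt a b m i)⟫ := by
      intro i _
      rw [← inner_add_left]
      congr 1
      abel
    rw [Finset.sum_congr rfl e1, Finset.sum_add_distrib]
    congr 1
    rw [sum_inner_tel p w m (pt a b m), pt_last a b hm, pt_zero]
  have hsumvar : ∑ i ∈ Finset.range m, ‖w (pt a b m (i+1)) - w (pt a b m i)‖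
      ≤ Vr k a b + Vr k' a b := by
    calc ∑ i ∈ Finset.range m, ‖w (pt a b m (i+1)) - w (pt a b m i)‖
        ≤ ∑ i ∈ Finset.range m, (‖k (pt a b m (i+1)) - k (pt a b m i)‖
            + ‖k' (pt a b m (i+1)) - k' (pt a b m i)‖) := by
          apply Finset.sum_le_sum
          intro i _
          have : w (pt a b m (i+1)) - w (pt a b m i)
              = (k (pt a b m (i+1)) - k (pt a b m i))
                - (k' (pt a b m (i+1)) - k' (pt a b m i)) := by simp only [hw]; abel
          rw [this]
          exact norm_sub_le _ _
      _ = (∑ i ∈ Finset.range m, ‖k (pt a b m (i+1)) - k (pt a b m i)‖)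
          + ∑ i ∈ Finset.range m, ‖k' (pt a b m (i+1)) - k' (pt a b m i)‖ :=
          Finset.sum_add_distrib
      _ ≤ Vr k a b + Vr k' a b := by
          apply add_le_add
          · exact sum_norm_sub_le hkB (fun j hj i hi => pt_mono hab m hi)
              (fun i hi => pt_mem hab hm hi)
          · exact sum_norm_sub_le hkB' (fun j hj i hi => pt_mono hab m hi)
              (fun i hi => pt_mem hab hm hi)
  have hE : |∑ i ∈ Finset.range m, ⟪z (pt a b m (i+1)) - p,
      w (pt a b m (i+1)) - w (pt a b m i)⟫| ≤ η * (Vr k a b + Vr k' a b) := by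
    apply sum_inner_pert (τ := pt a b m) _ hsumvar hη
    intro i hi
    exact hosc _ (pt_mem hab hm (by omega))
  have : S2 z w a b m - ⟪p, (k b - k' b) - (k a - k' a)⟫
      = ∑ i ∈ Finset.range m, ⟪z (pt a b m (i+1)) - p,
          w (pt a b m (i+1)) - w (pt a b m i)⟫ := by
    rw [hsplit]
    have : w b - w a = (k b - k' b) - (k a - k' a) := by simp only [hw]
    rw [this]; ring
  rw [this]
  exact hE

end SkoAux

namespace SkoAux
variable {d : ℕ}

lemma scalar_step {Q V L r η η' nβ RR : ℝ} (hr : 0 < r) (hL : 0 < L) (hLr : L ≤ r)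
    (hV : V ≤ r) (hVn : 0 ≤ V) (hnβ : 0 ≤ nβ) (hη' : 0 < η')
    (hsum : η' * nβ + η' + η' ≤ η)
    (hinc : Q * L - η' * nβ * L - η' * V - η' * r ≤ RR) :
    Q * (L / r) - η ≤ r⁻¹ * RR := by
  have h1 : r⁻¹ * (Q * L - η' * nβ * L - η' * V - η' * r) ≤ r⁻¹ * RR :=
    mul_le_mul_of_nonneg_left hinc (by positivity)
  have e : r⁻¹ * (Q * L - η' * nβ * L - η' * V - η' * r)
      = Q * (L / r) - η' * nβ * (L / r) - η' * (V / r) - η' := by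
    field_simp
  have hL1 : L / r ≤ 1 := (div_le_one hr).mpr hLr
  have hL0 : 0 ≤ L / r := div_nonneg hL.le hr.le
  have hV1 : V / r ≤ 1 := (div_le_one hr).mpr hV
  have hV0 : 0 ≤ V / r := div_nonneg hVn hr.le
  have h2 : η' * nβ * (L / r) ≤ η' * nβ := by
    have := mul_le_mul_of_nonneg_left hL1 (mul_nonneg hη'.le hnβ)
    rwa [mul_one] at this
  have h3 : η' * (V / r) ≤ η' := by
    have := mul_le_mul_of_nonneg_left hV1 hη'.le
    rwa [mul_one] at this
  linarith

set_option maxHeartbeats 2000000 in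
lemma main_contra {A : Set (Euc d × Euc d)} (hA : MaximalMonotoneGraph A)
    {x k x' k' : ℝ → Euc d}
    (hxc : ContinuousOn x (Ici 0)) (hxc' : ContinuousOn x' (Ici 0))
    (hkv : LocallyBoundedVariationOn k (Ici 0)) (hkv' : LocallyBoundedVariationOn k' (Ici 0))
    (hdom : ∀ t : ℝ, 0 ≤ t → x t ∈ closure (opDomain A))
    (hdom' : ∀ t : ℝ, 0 ≤ t → x' t ∈ closure (opDomain A))
    (hC : ∀ α β : Euc d, (α, β) ∈ A → ∀ s t : ℝ, 0 ≤ s → s < t →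
      ∃ I : ℝ, lsInt (fun u => x u - α) k s t I ∧
        0 ≤ I - ∫ u in Ioc s t, ⟪x u - α, β⟫)
    (hC' : ∀ α β : Euc d, (α, β) ∈ A → ∀ s t : ℝ, 0 ≤ s → s < t →
      ∃ I : ℝ, lsInt (fun u => x' u - α) k' s t I ∧
        0 ≤ I - ∫ u in Ioc s t, ⟪x' u - α, β⟫)
    {t₀ : ℝ} (ht₀ : 0 < t₀) {c : ℝ} (hc : 0 < c)
    (hbad : ∀ N : ℕ, S2 (fun u => x u - x' u) (fun u => k u - k' u) 0 t₀ (2^N) ≤ -c) :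
    False := by
  classical
  set z : ℝ → Euc d := fun u => x u - x' u with hzdef
  set w : ℝ → Euc d := fun u => k u - k' u with hwdef
  set ρ : ℝ → ℝ → ℝ := fun a b => Vr k a b + Vr k' a b + (b - a) with hρdef
  have hρpos : ∀ a b : ℝ, a < b → 0 < ρ a b := by
    intro a b h
    have := Vr_nonneg k a b; have := Vr_nonneg k' a b
    simp only [hρdef]; linarith
  have hρadd : ∀ a r b : ℝ, 0 ≤ a → a ≤ r → r ≤ b → ρ a r + ρ r b = ρ a b := by
    intro a r b h0 h1 h2
    simp only [hρdef]
    rw [show Vr k a r + Vr k' a r + (r - a) + (Vr k r b + Vr k' r b + (b - r))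
      = (Vr k a r + Vr k r b) + (Vr k' a r + Vr k' r b) + (b - a) by ring,
      Vr_add hkv h0 h1 h2, Vr_add hkv' h0 h1 h2]
  have hρ0 : 0 < ρ 0 t₀ := hρpos 0 t₀ ht₀
  set θ : ℝ := c / ρ 0 t₀ with hθdef
  have hθ : 0 < θ := div_pos hc hρ0
  have hθρ : θ * ρ 0 t₀ = c := div_mul_cancel₀ c (ne_of_gt hρ0)
  -- bisection
  obtain ⟨a, b, N, h0, hab, hbt, hamono, hbanti, hlen, hS⟩ :=
    bisect (fun a b N => S2 z w a b (2^N)) ρ t₀ θ ht₀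
      (by
        intro a b N ha hab
        show S2 z w a b (2^(N+1)) = _
        rw [pow_succ, mul_comm (2^N) 2]
        exact S2_split z w a b (pow_ne_zero N two_ne_zero))
      hρadd
      (by intro N; show S2 z w 0 t₀ (2^N) ≤ _; rw [neg_mul, hθρ]; exact hbad N)
  obtain ⟨u, hu⟩ := limit_point hamono hbanti hab
  have hu0 : 0 ≤ u := le_trans (h0 0) (hu 0).1
  have hb0 : ∀ g, 0 ≤ b g := fun g => le_trans (h0 g) (hab g).le
  have hbBk : ∀ g, BoundedVariationOn k (Icc (a g) (b g)) := fun g => bvOn hkv (h0 g) (hb0 g)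
  have hbBk' : ∀ g, BoundedVariationOn k' (Icc (a g) (b g)) := fun g => bvOn hkv' (h0 g) (hb0 g)
  -- normalized increments
  set ρg : ℕ → ℝ := fun g => ρ (a g) (b g) with hρgdef
  have hρgpos : ∀ g, 0 < ρg g := fun g => hρpos _ _ (hab g)
  set Gg : ℕ → Euc d := fun g => (ρg g)⁻¹ • (k (b g) - k (a g)) with hGgdef
  set Hg : ℕ → Euc d := fun g => (ρg g)⁻¹ • (k' (b g) - k' (a g)) with hHgdef
  set mg : ℕ → ℝ := fun g => (b g - a g) / ρg g with hmgdef
  have hVk_le : ∀ g, Vr k (a g) (b g) ≤ ρg g := by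
    intro g
    have := Vr_nonneg k' (a g) (b g); have := (hab g).le
    simp only [hρgdef, hρdef]; linarith
  have hVk'_le : ∀ g, Vr k' (a g) (b g) ≤ ρg g := by
    intro g
    have := Vr_nonneg k (a g) (b g); have := (hab g).le
    simp only [hρgdef, hρdef]; linarith
  have hGle : ∀ g, ‖Gg g‖ ≤ 1 := by
    intro g
    rw [hGgdef]
    simp only
    rw [norm_smul, norm_inv, Real.norm_eq_abs, abs_of_pos (hρgpos g)]
    rw [inv_mul_le_iff₀ (hρgpos g), mul_one]
    exact le_trans (norm_sub_le_Vr (hbBk g) (hab g).le) (hVk_le g)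
  have hHle : ∀ g, ‖Hg g‖ ≤ 1 := by
    intro g
    rw [hHgdef]
    simp only
    rw [norm_smul, norm_inv, Real.norm_eq_abs, abs_of_pos (hρgpos g)]
    rw [inv_mul_le_iff₀ (hρgpos g), mul_one]
    exact le_trans (norm_sub_le_Vr (hbBk' g) (hab g).le) (hVk'_le g)
  have hmg01 : ∀ g, 0 < mg g ∧ mg g ≤ 1 := by
    intro g
    constructor
    · exact div_pos (by linarith [hab g]) (hρgpos g)
    · rw [hmgdef]
      simp only
      rw [div_le_one (hρgpos g)]
      have := Vr_nonneg k (a g) (b g); have := Vr_nonneg k' (a g) (b g)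
      simp only [hρgdef, hρdef]; linarith
  -- Bolzano-Weierstrass
  set E : ℕ → Euc d × Euc d × ℝ := fun g => (Gg g, Hg g, mg g) with hEdef
  have hEmem : ∀ g, E g ∈ Metric.closedBall (0 : Euc d × Euc d × ℝ) 1 := by
    intro g
    rw [Metric.mem_closedBall, dist_zero_right]
    rw [Prod.norm_def, Prod.norm_def]
    apply max_le (hGle g)
    apply max_le (hHle g)
    rw [Real.norm_eq_abs, abs_of_pos (hmg01 g).1]
    exact (hmg01 g).2
  obtain ⟨L, _, φ, hφ, hconv⟩ :=
    tendsto_subseq_of_bounded Metric.isBounded_closedBall hEmem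
  obtain ⟨G, H, m⟩ := L
  have hGt : Tendsto (fun g => Gg (φ g)) atTop (𝓝 G) :=
    ((continuous_fst.tendsto ((G, H, m) : Euc d × Euc d × ℝ))).comp hconv
  have hHt : Tendsto (fun g => Hg (φ g)) atTop (𝓝 H) :=
    ((continuous_fst.tendsto ((H, m) : Euc d × ℝ)).comp
      ((continuous_snd.tendsto ((G, H, m) : Euc d × Euc d × ℝ)).comp hconv))
  have hmt : Tendsto (fun g => mg (φ g)) atTop (𝓝 m) :=
    ((continuous_snd.tendsto ((H, m) : Euc d × ℝ)).comp
      ((continuous_snd.tendsto ((G, H, m) : Euc d × Euc d × ℝ)).comp hconv))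
  have hmnn : 0 ≤ m := ge_of_tendsto' hmt (fun g => (hmg01 (φ g)).1.le)
  have hφtop : Tendsto φ atTop atTop := hφ.tendsto_atTop
  -- oscillation control
  have hosc : ∀ η : ℝ, 0 < η → ∀ᶠ g in atTop,
      ∀ v ∈ Icc (a g) (b g), ‖x v - x u‖ ≤ η ∧ ‖x' v - x' u‖ ≤ η := by
    intro η hη
    obtain ⟨δ1, hδ1, hδ1'⟩ := Metric.continuousWithinAt_iff.mp (hxc u hu0) η hη
    obtain ⟨δ2, hδ2, hδ2'⟩ := Metric.continuousWithinAt_iff.mp (hxc' u hu0) η hη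
    have hgeom : Tendsto (fun g : ℕ => t₀ / 2^g) atTop (𝓝 0) := by
      have h2 : Tendsto (fun g : ℕ => t₀ * ((1:ℝ)/2)^g) atTop (𝓝 (t₀ * 0)) :=
        (tendsto_pow_atTop_nhds_zero_of_lt_one (by norm_num) (by norm_num)).const_mul t₀
      rw [mul_zero] at h2
      convert h2 using 2 with g
      rw [div_pow, one_pow, div_eq_mul_inv, div_eq_mul_inv, inv_eq_one_div]
      ring
    have hev : ∀ᶠ g in atTop, t₀ / 2^g < min δ1 δ2 :=
      hgeom.eventually (gt_mem_nhds (lt_min hδ1 hδ2))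
    filter_upwards [hev] with g hg v hv
    have hlg := hlen g
    have hdist : dist v u < min δ1 δ2 := by
      rw [Real.dist_eq]
      have h1 := (hu g).1; have h2 := (hu g).2
      have habs : |v - u| ≤ b g - a g :=
        abs_sub_le_iff.mpr ⟨by linarith [hv.1, hv.2], by linarith [hv.1, hv.2]⟩
      linarith [hlg ▸ hg]
    have hv0 : v ∈ Ici (0:ℝ) := le_trans (h0 g) hv.1
    constructor
    · have := hδ1' hv0 (lt_of_lt_of_le hdist (min_le_left _ _))
      rw [dist_eq_norm] at this; exact this.le
    · have := hδ2' hv0 (lt_of_lt_of_le hdist (min_le_right _ _))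
      rw [dist_eq_norm] at this; exact this.le
  -- limit of the quadratic term
  have h3 : ⟪x u - x' u, G - H⟫ ≤ -θ := by
    apply le_of_forall_pos_le_add
    intro η hη
    have hlim : Tendsto (fun g => (⟪x u - x' u, Gg (φ g) - Hg (φ g)⟫ : ℝ)) atTop
        (𝓝 ⟪x u - x' u, G - H⟫) := Tendsto.inner tendsto_const_nhds (hGt.sub hHt)
    apply le_of_tendsto hlim
    filter_upwards [hφtop.eventually (hosc (η/2) (by linarith))] with g hg
    have hS2 := hS (φ g)
    have hoscz : ∀ v ∈ Icc (a (φ g)) (b (φ g)), ‖z v - (x u - x' u)‖ ≤ η := by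
      intro v hv
      have he : z v - (x u - x' u) = (x v - x u) - (x' v - x' u) := by
        simp only [hzdef]; abel
      rw [he]
      calc ‖(x v - x u) - (x' v - x' u)‖ ≤ ‖x v - x u‖ + ‖x' v - x' u‖ := norm_sub_le _ _
        _ ≤ η/2 + η/2 := add_le_add (hg v hv).1 (hg v hv).2
        _ = η := by ring
    have hclose := S2_close (z := z) (k := k) (k' := k') (hbBk (φ g)) (hbBk' (φ g))
      (pow_ne_zero (N (φ g)) two_ne_zero) (hab (φ g)).le (x u - x' u)
      (by linarith : (0:ℝ) ≤ η) hoscz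
    rw [← hwdef] at hclose
    set X : ℝ := ⟪x u - x' u, (k (b (φ g)) - k' (b (φ g))) - (k (a (φ g)) - k' (a (φ g)))⟫
      with hXdef
    have hVle : Vr k (a (φ g)) (b (φ g)) + Vr k' (a (φ g)) (b (φ g)) ≤ ρg (φ g) := by
      have := (hab (φ g)).le
      simp only [hρgdef, hρdef]; linarith
    have hXle : X ≤ (-θ + η) * ρg (φ g) := by
      have h1 := (abs_le.mp hclose).1
      have h2 := mul_le_mul_of_nonneg_left hVle (by linarith : (0:ℝ) ≤ η)
      have hρg := hρgpos (φ g)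
      nlinarith [hS2]
    have e1 : Gg (φ g) - Hg (φ g) = (ρg (φ g))⁻¹ •
        ((k (b (φ g)) - k' (b (φ g))) - (k (a (φ g)) - k' (a (φ g)))) := by
      simp only [hGgdef, hHgdef]
      rw [← smul_sub]
      congr 1
      abel
    rw [e1, real_inner_smul_right, ← hXdef]
    calc (ρg (φ g))⁻¹ * X ≤ (ρg (φ g))⁻¹ * ((-θ + η) * ρg (φ g)) :=
          mul_le_mul_of_nonneg_left hXle (inv_nonneg.mpr (hρgpos (φ g)).le)
      _ = -θ + η := by
          rw [mul_comm (-θ + η), ← mul_assoc, inv_mul_cancel₀ (hρgpos (φ g)).ne', one_mul]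
  -- limit of the variational inequality, first solution
  have hkey : ∀ (x₁ k₁ : ℝ → Euc d) (G₁ : Euc d),
      ContinuousOn x₁ (Ici 0) →
      LocallyBoundedVariationOn k₁ (Ici 0) →
      (∀ α β : Euc d, (α, β) ∈ A → ∀ s t : ℝ, 0 ≤ s → s < t →
        ∃ I : ℝ, lsInt (fun u => x₁ u - α) k₁ s t I ∧
          0 ≤ I - ∫ u in Ioc s t, ⟪x₁ u - α, β⟫) →
      (∀ g, Vr k₁ (a g) (b g) ≤ ρg g) →
      Tendsto (fun g => (ρg (φ g))⁻¹ • (k₁ (b (φ g)) - k₁ (a (φ g)))) atTop (𝓝 G₁) →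
      (∀ η : ℝ, 0 < η → ∀ᶠ g in atTop, ∀ v ∈ Icc (a g) (b g), ‖x₁ v - x₁ u‖ ≤ η) →
      ∀ α β : Euc d, (α, β) ∈ A → ⟪x₁ u - α, β⟫ * m ≤ ⟪x₁ u - α, G₁⟫ := by
    intro x₁ k₁ G₁ hx₁c hk₁v hC₁ hV₁le hG₁t hosc₁ α β hαβ
    apply le_of_forall_pos_le_add
    intro η hη
    have hβ3 : (0:ℝ) < ‖β‖ + 3 := by positivity
    set η' : ℝ := η / (‖β‖ + 3) with hη'def
    have hη' : 0 < η' := div_pos hη hβ3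
    have hlim1 : Tendsto (fun g => (⟪x₁ u - α, (ρg (φ g))⁻¹ • (k₁ (b (φ g)) - k₁ (a (φ g)))⟫ : ℝ))
        atTop (𝓝 ⟪x₁ u - α, G₁⟫) := Tendsto.inner tendsto_const_nhds hG₁t
    have hlim2 : Tendsto (fun g => (⟪x₁ u - α, β⟫ : ℝ) * mg (φ g) - η) atTop
        (𝓝 (⟪x₁ u - α, β⟫ * m - η)) := (hmt.const_mul _).sub_const η
    have hev : ∀ᶠ g in atTop, (⟪x₁ u - α, β⟫ : ℝ) * mg (φ g) - η
        ≤ ⟪x₁ u - α, (ρg (φ g))⁻¹ • (k₁ (b (φ g)) - k₁ (a (φ g)))⟫ := by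
      filter_upwards [hφtop.eventually (hosc₁ η' hη')] with g hg
      have hρg := hρgpos (φ g)
      have hinc := increment_lower hC₁ hk₁v hx₁c (h0 (φ g)) (hab (φ g)) hαβ
        (p := x₁ u) (η := η') hη'.le hg (ε := η' * ρg (φ g)) (mul_pos hη' hρg)
      rw [real_inner_smul_right]
      have hL : 0 < b (φ g) - a (φ g) := by linarith [hab (φ g)]
      have hLr : b (φ g) - a (φ g) ≤ ρg (φ g) := by
        have := Vr_nonneg k (a (φ g)) (b (φ g))
        have := Vr_nonneg k' (a (φ g)) (b (φ g))
        simp only [hρgdef, hρdef]; linarith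
      have hsum : η' * ‖β‖ + η' + η' ≤ η := by
        have he : η' * (‖β‖ + 3) = η := div_mul_cancel₀ η hβ3.ne'
        nlinarith [hη'.le]
      have hgoal := scalar_step (RR := ⟪x₁ u - α, k₁ (b (φ g)) - k₁ (a (φ g))⟫)
        hρg hL hLr (hV₁le (φ g)) (Vr_nonneg k₁ (a (φ g)) (b (φ g))) (norm_nonneg β)
        hη' hsum hinc
      exact hgoal
    have := le_of_tendsto_of_tendsto hlim2 hlim1 hev
    linarith
  have h1 := hkey x k G hxc hkv hC hVk_le hGt
    (fun η hη => (hosc η hη).mono (fun g hg v hv => (hg v hv).1))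
  have h2 := hkey x' k' H hxc' hkv' hC' hVk'_le hHt
    (fun η hη => (hosc η hη).mono (fun g hg v hv => (hg v hv).2))
  -- endgame
  rcases eq_or_lt_of_le hmnn with hm0 | hmpos
  · -- m = 0 : use closure of the domain
    have hG0 : closure (opDomain A) ⊆ {v : Euc d | 0 ≤ ⟪x u - v, G⟫} := by
      apply closure_minimal
      · rintro α ⟨β, hβ⟩
        have h := h1 α β hβ
        rw [← hm0, mul_zero] at h
        exact h
      · have hcont : Continuous fun v : Euc d => (⟪x u - v, G⟫ : ℝ) := by
          exact Continuous.inner (continuous_const.sub continuous_id) continuous_const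
        exact isClosed_le continuous_const hcont
    have hH0 : closure (opDomain A) ⊆ {v : Euc d | 0 ≤ ⟪x' u - v, H⟫} := by
      apply closure_minimal
      · rintro α ⟨β, hβ⟩
        have h := h2 α β hβ
        rw [← hm0, mul_zero] at h
        exact h
      · have hcont : Continuous fun v : Euc d => (⟪x' u - v, H⟫ : ℝ) := by
          exact Continuous.inner (continuous_const.sub continuous_id) continuous_const
        exact isClosed_le continuous_const hcont
    have hg1 : (0:ℝ) ≤ ⟪x u - x' u, G⟫ := hG0 (hdom' u hu0)
    have hg2 : (0:ℝ) ≤ ⟪x' u - x u, H⟫ := hH0 (hdom u hu0)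
    have he : (⟪x u - x' u, G - H⟫ : ℝ) = ⟪x u - x' u, G⟫ - ⟪x u - x' u, H⟫ :=
      inner_sub_right _ _ _
    have he2 : (⟪x u - x' u, H⟫ : ℝ) = - ⟪x' u - x u, H⟫ := by
      rw [← inner_neg_left]
      congr 1
      abel
    rw [he, he2] at h3
    linarith
  · -- m > 0 : maximality
    have hm' : m ≠ 0 := hmpos.ne'
    have hdiv : ∀ B R : ℝ, B * m ≤ R → B ≤ m⁻¹ * R := by
      intro B R hBR
      have h' := mul_le_mul_of_nonneg_left hBR (inv_nonneg.mpr hmnn)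
      calc B = m⁻¹ * (B * m) := by field_simp
        _ ≤ m⁻¹ * R := h'
    have hpA : (x u, m⁻¹ • G) ∈ A := by
      apply hA.2
      intro pr hpr
      have h := h1 pr.1 pr.2 (by rwa [Prod.mk.eta])
      have ha1 : (⟪m⁻¹ • G - pr.2, x u - pr.1⟫ : ℝ)
          = m⁻¹ * ⟪x u - pr.1, G⟫ - ⟪x u - pr.1, pr.2⟫ := by
        rw [inner_sub_left, real_inner_smul_left, real_inner_comm G,
          real_inner_comm pr.2]
      rw [ha1]
      have := hdiv _ _ h
      linarith
    have hqA : (x' u, m⁻¹ • H) ∈ A := by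
      apply hA.2
      intro pr hpr
      have h := h2 pr.1 pr.2 (by rwa [Prod.mk.eta])
      have ha1 : (⟪m⁻¹ • H - pr.2, x' u - pr.1⟫ : ℝ)
          = m⁻¹ * ⟪x' u - pr.1, H⟫ - ⟪x' u - pr.1, pr.2⟫ := by
        rw [inner_sub_left, real_inner_smul_left, real_inner_comm H,
          real_inner_comm pr.2]
      rw [ha1]
      have := hdiv _ _ h
      linarith
    have hmon := hA.1 (x u, m⁻¹ • G) hpA (x' u, m⁻¹ • H) hqA
    simp only at hmon
    have e : (⟪m⁻¹ • G - m⁻¹ • H, x u - x' u⟫ : ℝ)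
        = m⁻¹ * ⟪x u - x' u, G - H⟫ := by
      rw [← smul_sub, real_inner_smul_left, real_inner_comm]
    rw [e] at hmon
    have : m⁻¹ * ⟪x u - x' u, G - H⟫ ≤ m⁻¹ * (-θ) :=
      mul_le_mul_of_nonneg_left h3 (inv_nonneg.mpr hmnn)
    have hinvpos : 0 < m⁻¹ := inv_pos.mpr hmpos
    nlinarith

end SkoAux

namespace SkoAux
variable {d : ℕ}

set_option maxHeartbeats 1000000 in
lemma sols_eq {A : Set (Euc d × Euc d)} (hA : MaximalMonotoneGraph A)
    {y x k x' k' : ℝ → Euc d}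
    (hxc : ContinuousOn x (Ici 0)) (hxc' : ContinuousOn x' (Ici 0))
    (hkv : LocallyBoundedVariationOn k (Ici 0)) (hkv' : LocallyBoundedVariationOn k' (Ici 0))
    (hk0 : k 0 = 0) (hk0' : k' 0 = 0)
    (hxk : ∀ t : ℝ, 0 ≤ t → x t = y t - k t ∧ x t ∈ closure (opDomain A))
    (hxk' : ∀ t : ℝ, 0 ≤ t → x' t = y t - k' t ∧ x' t ∈ closure (opDomain A))
    (hC : ∀ α β : Euc d, (α, β) ∈ A → ∀ s t : ℝ, 0 ≤ s → s < t →
      ∃ I : ℝ, lsInt (fun u => x u - α) k s t I ∧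
        0 ≤ I - ∫ u in Ioc s t, ⟪x u - α, β⟫)
    (hC' : ∀ α β : Euc d, (α, β) ∈ A → ∀ s t : ℝ, 0 ≤ s → s < t →
      ∃ I : ℝ, lsInt (fun u => x' u - α) k' s t I ∧
        0 ≤ I - ∫ u in Ioc s t, ⟪x' u - α, β⟫) :
    ∀ t : ℝ, 0 ≤ t → x t = x' t := by
  intro t₀ ht₀
  rcases eq_or_lt_of_le ht₀ with h0 | ht₀'
  · rw [← h0]
    rw [(hxk 0 le_rfl).1, (hxk' 0 le_rfl).1, hk0, hk0']
  set z : ℝ → Euc d := fun u => x u - x' u with hzdef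
  set w : ℝ → Euc d := fun u => k u - k' u with hwdef
  have hzw : ∀ v : ℝ, 0 ≤ v → z v = - w v := by
    intro v hv
    simp only [hzdef, hwdef, (hxk v hv).1, (hxk' v hv).1]
    abel
  have hz0 : z 0 = 0 := by
    simp only [hzdef, (hxk 0 le_rfl).1, (hxk' 0 le_rfl).1, hk0, hk0']
    abel
  have hkey : ∀ N : ℕ, ‖z t₀‖^2 ≤ -2 * S2 z w 0 t₀ (2^N) := by
    intro N
    have h2N : (2:ℕ)^N ≠ 0 := pow_ne_zero N two_ne_zero
    have hq := norm_sq_le_two_sum z (n := 2^N) (pt 0 t₀ (2^N))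
      (by rw [pt_zero]; exact hz0)
    rw [pt_last 0 t₀ h2N] at hq
    have hsum_eq : ∑ i ∈ Finset.range (2^N), (⟪z (pt 0 t₀ (2^N) (i+1)),
        z (pt 0 t₀ (2^N) (i+1)) - z (pt 0 t₀ (2^N) i)⟫ : ℝ)
        = - S2 z w 0 t₀ (2^N) := by
      unfold S2
      rw [← Finset.sum_neg_distrib]
      apply Finset.sum_congr rfl
      intro i hi
      rw [Finset.mem_range] at hi
      have hm1 : pt 0 t₀ (2^N) (i+1) ∈ Icc (0:ℝ) t₀ := pt_mem ht₀'.le h2N (by omega)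
      have hm2 : pt 0 t₀ (2^N) i ∈ Icc (0:ℝ) t₀ := pt_mem ht₀'.le h2N (by omega)
      rw [show z (pt 0 t₀ (2^N) (i+1)) - z (pt 0 t₀ (2^N) i)
        = -(w (pt 0 t₀ (2^N) (i+1)) - w (pt 0 t₀ (2^N) i)) by
          rw [hzw _ hm1.1, hzw _ hm2.1]; abel]
      rw [inner_neg_right]
    rw [hsum_eq] at hq
    linarith
  have hfin : ‖z t₀‖^2 ≤ 0 := by
    by_contra hpos
    push_neg at hpos
    refine main_contra hA hxc hxc' hkv hkv'
      (fun t ht => (hxk t ht).2) (fun t ht => (hxk' t ht).2) hC hC' ht₀'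
      (c := ‖z t₀‖^2 / 2) (by linarith) ?_
    intro N
    have := hkey N
    show S2 z w 0 t₀ (2^N) ≤ _
    linarith
  have : z t₀ = 0 := by
    have h1 : (0:ℝ) ≤ ‖z t₀‖^2 := sq_nonneg _
    have h2 : ‖z t₀‖ = 0 := by
      nlinarith [norm_nonneg (z t₀)]
    exact norm_eq_zero.mp h2
  have := sub_eq_zero.mp this
  exact this

end SkoAux

/-- For continuous input `y`, any solution of the Skorokhod problem
`SP(A, Π; y)` is continuous and does not depend on the choice of the generalized
projection `Π`. -/
theorem skorokhod_problem_continuous_input {d : ℕ} (A : Set (Euc d × Euc d))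
    (hA : MaximalMonotoneGraph A)
    (proj proj' : Euc d → Euc d) (hproj : IsGenProj A proj) (hproj' : IsGenProj A proj')
    (y : ℝ → Euc d) (hy : ContinuousOn y (Ici 0)) (hy0 : y 0 ∈ closure (opDomain A))
    (x k x' k' : ℝ → Euc d)
    (hsol : SkorokhodSolution A proj y x k)
    (hsol' : SkorokhodSolution A proj' y x' k') :
    ContinuousOn x (Ici 0) ∧ ContinuousOn k (Ici 0) ∧
      ∀ t : ℝ, 0 ≤ t → x t = x' t ∧ k t = k' t := by
  obtain ⟨hxcad, hkcad, hxk, hkv, hk0, hC0, hjmp⟩ := hsol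
  obtain ⟨hxcad', hkcad', hxk', hkv', hk0', hC0', hjmp'⟩ := hsol'
  -- no jumps
  have hjk : ∀ t : ℝ, jump k t = 0 := SkoAux.sol_no_jump hproj hy hxcad hxk hjmp
  have hjk' : ∀ t : ℝ, jump k' t = 0 := SkoAux.sol_no_jump hproj' hy hxcad' hxk' hjmp'
  -- continuity
  have hkc : ContinuousOn k (Ici 0) := SkoAux.cadlag_continuous hkcad hjk
  have hkc' : ContinuousOn k' (Ici 0) := SkoAux.cadlag_continuous hkcad' hjk'
  have hxc : ContinuousOn x (Ici 0) :=
    (hy.sub hkc).congr (fun u hu => (hxk u hu).1)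
  have hxc' : ContinuousOn x' (Ici 0) :=
    (hy.sub hkc').congr (fun u hu => (hxk' u hu).1)
  -- rewrite contPart
  rw [SkoAux.contPart_eq_self hjk] at hC0
  rw [SkoAux.contPart_eq_self hjk'] at hC0'
  have hxx := SkoAux.sols_eq hA hxc hxc' hkv hkv' hk0 hk0' hxk hxk' hC0 hC0'
  refine ⟨hxc, hkc, fun t ht => ⟨hxx t ht, ?_⟩⟩
  have h1 := (hxk t ht).1
  have h2 := (hxk' t ht).1
  have h3 := hxx t ht
  have e1 : k t = y t - x t := by rw [h1]; abel
  have e2 : k' t = y t - x' t := by rw [h2]; abel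
  rw [e1, e2, h3]

end
end
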